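/- Fix a directed acyclic graph, a quasi-flow f, and a linear order ⊵ on the edge set E. Every swap-progressive path decomposition of f is an extreme point of the (convex) set of all path decompositions of f. -/

import Mathlib

open scoped Classical

namespace StmtDAG

variable {N E : Type*} [Fintype N] [Fintype E] [DecidableEq N] [DecidableEq E]

/-- `(src, tgt, s, t)` describes a directed acyclic graph with finite node type `N` and
finite edge type `E` (parallel edges are allowed, since `E` is an abstract type with
endpoint maps): there is no directed cycle, `s` is the unique node with no incoming edge
(the source), and `t` is the unique node with no outgoing edge (the sink). -/
def IsDAG (src tgt : E → N) (s t : N) : Prop :=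
  (∀ a : N, ¬ Relation.TransGen (fun a b => ∃ e, src e = a ∧ tgt e = b) a a) ∧
  (∀ e, tgt e ≠ s) ∧ (∀ e, src e ≠ t) ∧
  (∀ n, (∀ e, tgt e ≠ n) → n = s) ∧
  (∀ n, (∀ e, src e ≠ n) → n = t)

variable (src tgt : E → N) (s t : N)

/-- A path from `s` to `t`: a nonempty list of consecutive edges starting at `s` and
ending at `t`.  (In a DAG these are in bijective correspondence with the edge *sets* in
which `s` and `t` each appear exactly once and every other node appearing at all appears
exactly once as a head and once as a tail.) -/
structure GPath where
  /-- the edges of the path, in order from the source to the sink -/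
  edges : List E
  ne : edges ≠ []
  chain : edges.Chain' fun e f => tgt e = src f
  first : src (edges.head ne) = s
  last : tgt (edges.getLast ne) = t

/-- A quasi-flow: a nonnegative edge weighting such that, at every node other than the
source and the sink, total in-flow equals total out-flow. -/
def IsQuasiFlow (f : E → ℝ) : Prop :=
  (∀ e, 0 ≤ f e) ∧
  ∀ n : N, n ≠ s → n ≠ t →
    (∑ e : E, if tgt e = n then f e else 0) = (∑ e : E, if src e = n then f e else 0)

/-- `π` is a path decomposition of the quasi-flow `f`: a nonnegative weighting of paths
whose induced edge weights recover `f`. -/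
def IsPathDecomp (f : E → ℝ) (π : GPath src tgt s t → ℝ) : Prop :=
  (∀ P, 0 ≤ π P) ∧
  ∀ e : E, f e = ∑ᶠ P : GPath src tgt s t, if e ∈ P.edges then π P else 0

/-- `P.edges = a ++ b`, split exactly at the node `n`. -/
def SplitsAt (P : GPath src tgt s t) (n : N) (a b : List E) : Prop :=
  P.edges = a ++ b ∧ (∀ h : b ≠ [], src (b.head h) = n) ∧ (b = [] → n = t)

/-- `(Q₁, Q₂)` are the `n`-conjugates of the pair `(P₁, P₂)`, both of which pass through
the node `n`: `Q₁` follows `P₁` up to `n` and `P₂` thereafter, and vice versa. -/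
def IsConjAt (n : N) (P₁ P₂ Q₁ Q₂ : GPath src tgt s t) : Prop :=
  ∃ a₁ b₁ a₂ b₂ : List E,
    SplitsAt src tgt s t P₁ n a₁ b₁ ∧ SplitsAt src tgt s t P₂ n a₂ b₂ ∧
    Q₁.edges = a₁ ++ b₂ ∧ Q₂.edges = a₂ ++ b₁

/-- The indicator (point mass) vector of a path. -/
noncomputable def indP (P₀ : GPath src tgt s t) : GPath src tgt s t → ℝ :=
  fun P => if P = P₀ then 1 else 0

/-- A Ryser swap: `1_{Q₁} + 1_{Q₂} - 1_{P₁} - 1_{P₂}` where `(Q₁, Q₂)` are the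
`n`-conjugates of a pair `(P₁, P₂)` compatible at some node `n`. -/
def IsRyserSwap (R : GPath src tgt s t → ℝ) : Prop :=
  ∃ (n : N) (P₁ P₂ Q₁ Q₂ : GPath src tgt s t),
    IsConjAt src tgt s t n P₁ P₂ Q₁ Q₂ ∧
    R = indP src tgt s t Q₁ + indP src tgt s t Q₂ -
          indP src tgt s t P₁ - indP src tgt s t P₂

/-- The Ryser subspace: the linear span of all Ryser swaps. -/
noncomputable def RyserSub : Submodule ℝ (GPath src tgt s t → ℝ) :=
  Submodule.span ℝ {R | IsRyserSwap src tgt s t R}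

/-- `π` is a probability distribution on the path set. -/
def IsDistP (π : GPath src tgt s t → ℝ) : Prop :=
  (∀ P, 0 ≤ π P) ∧ ∑ᶠ P : GPath src tgt s t, π P = 1


/-- `π` is a swap-progressive path decomposition with respect to the linear order `tri`
on edges (`tri e₁ e₂` means `e₁ ⊵ e₂`): its support can be enumerated `P_1, …, P_K` so
that whenever `P_i` and `P_j` both pass through a node `n` and `i > j`, the edge of `P_i`
leaving `n` is `⊵`-greater than or equal to the edge of `P_j` leaving `n`. -/
def SwapProgG (tri : E → E → Prop) (π : GPath src tgt s t → ℝ) : Prop :=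
  ∃ (K : ℕ) (en : Fin K → GPath src tgt s t), Function.Injective en ∧
    Set.range en = {P | π P ≠ 0} ∧
    ∀ i j : Fin K, j < i → ∀ (n : N) (e₁ e₂ : E),
      e₁ ∈ (en i).edges → e₂ ∈ (en j).edges → src e₁ = n → src e₂ = n → tri e₁ e₂

set_option linter.unusedSectionVars false

variable {src tgt s t}

lemma chain_step (P : GPath src tgt s t) {k : ℕ} (hk : k + 1 < P.edges.length) :
    tgt (P.edges[k]'(by omega)) = src (P.edges[k+1]'hk) := by
  have := List.isChain_iff_getElem.1 P.chain k (by omega)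
  simpa using this

lemma chain_step' (P : GPath src tgt s t) {k l : ℕ} (hkl : k + 1 = l)
    (hl : l < P.edges.length) :
    tgt (P.edges[k]'(by omega)) = src (P.edges[l]'hl) := by
  subst hkl; exact chain_step P hl

lemma src_get0 (P : GPath src tgt s t) (h0 : 0 < P.edges.length) :
    src (P.edges[0]'h0) = s := by
  have := P.first
  rwa [List.head_eq_getElem] at this

lemma transGen_src (P : GPath src tgt s t) :
    ∀ (j i : ℕ) (hij : i < j) (hj : j < P.edges.length),
      Relation.TransGen (fun a b => ∃ e, src e = a ∧ tgt e = b)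
        (src (P.edges[i]'(hij.trans hj))) (src (P.edges[j]'hj)) := by
  intro j
  induction j with
  | zero => omega
  | succ j ih =>
    intro i hij hj
    have hj' : j < P.edges.length := by omega
    have hrel : (fun a b => ∃ e, src e = a ∧ tgt e = b)
        (src (P.edges[j]'hj')) (src (P.edges[j+1]'hj)) :=
      ⟨P.edges[j]'hj', rfl, chain_step P hj⟩
    rcases Nat.lt_succ_iff_lt_or_eq.1 hij with h | h
    · exact (ih i h hj').tail hrel
    · subst h; exact Relation.TransGen.single hrel

lemma src_inj (hdag : IsDAG src tgt s t) (P : GPath src tgt s t) {e₁ e₂ : E}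
    (h₁ : e₁ ∈ P.edges) (h₂ : e₂ ∈ P.edges) (hs : src e₁ = src e₂) : e₁ = e₂ := by
  obtain ⟨i, hi, rfl⟩ := List.mem_iff_getElem.1 h₁
  obtain ⟨j, hj, rfl⟩ := List.mem_iff_getElem.1 h₂
  rcases lt_trichotomy i j with h | h | h
  · have := transGen_src P j i h hj
    rw [show (P.edges[i]'(h.trans hj)) = P.edges[i]'hi from rfl, hs] at this
    exact absurd this (hdag.1 _)
  · subst h; rfl
  · have := transGen_src P i j h hi
    rw [show (P.edges[j]'(h.trans hi)) = P.edges[j]'hj from rfl, ← hs] at this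
    exact absurd this (hdag.1 _)

lemma path_next (P : GPath src tgt s t) {e : E} (he : e ∈ P.edges)
    (ht : tgt e ≠ t) : ∃ g ∈ P.edges, src g = tgt e := by
  obtain ⟨i, hi, rfl⟩ := List.mem_iff_getElem.1 he
  by_cases h : i + 1 < P.edges.length
  · exact ⟨P.edges[i+1]'h, List.getElem_mem h, (chain_step P h).symm⟩
  · exfalso
    apply ht
    have hi' : i = P.edges.length - 1 := by omega
    have : P.edges[i]'hi = P.edges.getLast P.ne := by
      rw [List.getLast_eq_getElem]
      congr 1
    rw [this]
    exact P.last

lemma gpath_eq_of_edges {P Q : GPath src tgt s t} (h : P.edges = Q.edges) : P = Q := by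
  cases P; cases Q; cases h; rfl

lemma gpath_eq_of_subset (hdag : IsDAG src tgt s t) (P Q : GPath src tgt s t)
    (h : ∀ e ∈ P.edges, e ∈ Q.edges) : P = Q := by
  have hP0 : 0 < P.edges.length := List.length_pos_iff.2 P.ne
  have hQ0 : 0 < Q.edges.length := List.length_pos_iff.2 Q.ne
  have key : ∀ k (hk : k < P.edges.length),
      ∃ (hk' : k < Q.edges.length), Q.edges[k]'hk' = P.edges[k]'hk := by
    intro k
    induction k with
    | zero =>
      intro hk
      refine ⟨hQ0, ?_⟩
      apply src_inj hdag Q (List.getElem_mem hQ0) (h _ (List.getElem_mem hk))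
      rw [src_get0 Q hQ0, src_get0 P hk]
    | succ k ih =>
      intro hk
      obtain ⟨hk', hQk⟩ := ih (by omega)
      have hmem : P.edges[k+1]'hk ∈ Q.edges := h _ (List.getElem_mem hk)
      have hk1' : k + 1 < Q.edges.length := by
        by_contra hcon
        have hkl : k = Q.edges.length - 1 := by omega
        have hlast : Q.edges[k]'hk' = Q.edges.getLast Q.ne := by
          rw [List.getLast_eq_getElem]; congr 1
        have ht : tgt (Q.edges[k]'hk') = t := by rw [hlast]; exact Q.last
        have : src (P.edges[k+1]'hk) = t := by
          rw [← chain_step P hk, ← hQk, ht]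
        exact hdag.2.2.1 _ this
      refine ⟨hk1', ?_⟩
      apply src_inj hdag Q (List.getElem_mem hk1') hmem
      rw [← chain_step Q hk1', hQk, chain_step P hk]
  have hlen : Q.edges.length = P.edges.length := by
    by_contra hne
    have hlt : P.edges.length < Q.edges.length := by
      rcases lt_or_ge P.edges.length Q.edges.length with h' | h'
      · exact h'
      · exfalso; obtain ⟨hk', _⟩ := key (P.edges.length - 1) (by omega); omega
    obtain ⟨hk', hQk⟩ := key (P.edges.length - 1) (by omega)
    have hlast : Q.edges[P.edges.length - 1]'hk' = P.edges.getLast P.ne := by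
      rw [hQk, List.getLast_eq_getElem]
    have hstep : tgt (Q.edges[P.edges.length - 1]'hk')
        = src (Q.edges[P.edges.length]'hlt) := chain_step' Q (by omega) hlt
    have : src (Q.edges[P.edges.length]'hlt) = t := by
      rw [← hstep, hlast]; exact P.last
    exact hdag.2.2.1 _ this
  apply gpath_eq_of_edges
  apply List.ext_get (by omega)
  intro n h₁ h₂
  simp only [List.get_eq_getElem]
  exact ((key n h₁).2).symm

lemma ker_lemma (hdag : IsDAG src tgt s t) {tri : E → E → Prop}
    (htri : IsLinearOrder E tri)
    {K : ℕ} (en : Fin K → GPath src tgt s t) (hinj : Function.Injective en)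
    (horder : ∀ i j : Fin K, j < i → ∀ (n : N) (e₁ e₂ : E),
      e₁ ∈ (en i).edges → e₂ ∈ (en j).edges → src e₁ = n → src e₂ = n → tri e₁ e₂)
    (c : GPath src tgt s t → ℝ) (hsupp : Function.support c ⊆ Set.range en)
    (hker : ∀ e : E, (∑ i : Fin K, if e ∈ (en i).edges then c (en i) else 0) = 0) :
    c = 0 := by
  by_contra hc
  have hanti : ∀ a b : E, tri a b → tri b a → a = b := fun a b h1 h2 =>
    htri.toIsPartialOrder.toAntisymm.antisymm a b h1 h2
  obtain ⟨P₀, hP₀⟩ : ∃ P, c P ≠ 0 := by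
    by_contra h; push_neg at h; exact hc (funext fun P => h P)
  obtain ⟨i₀, hi₀⟩ := hsupp hP₀
  have hTne : (Finset.univ.filter (fun i : Fin K => c (en i) ≠ 0)).Nonempty :=
    ⟨i₀, by simp only [Finset.mem_filter, Finset.mem_univ, true_and]; rw [hi₀]; exact hP₀⟩
  set T := Finset.univ.filter (fun i : Fin K => c (en i) ≠ 0) with hT
  set m := T.max' hTne with hm
  have hcm : c (en m) ≠ 0 := (Finset.mem_filter.1 (T.max'_mem hTne)).2
  have hL : 0 < (en m).edges.length := List.length_pos_iff.2 (en m).ne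
  -- every edge of the last path is covered by a strictly earlier support path
  have cov : ∀ k (hk : k < (en m).edges.length),
      ∃ j : Fin K, j < m ∧ c (en j) ≠ 0 ∧ (en m).edges[k]'hk ∈ (en j).edges := by
    intro k hk
    by_contra hcon
    push_neg at hcon
    have h0 := hker ((en m).edges[k]'hk)
    rw [Finset.sum_eq_single m ?_ ?_] at h0
    · rw [if_pos (List.getElem_mem hk)] at h0
      exact hcm h0
    · intro j _ hjm
      by_cases hcj : c (en j) = 0
      · split <;> simp [hcj]
      · have hjT : j ∈ T := Finset.mem_filter.2 ⟨Finset.mem_univ _, hcj⟩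
        have hjlt : j < m := lt_of_le_of_ne (Finset.le_max' T j hjT) hjm
        rw [if_neg (hcon j hjlt hcj)]
    · intro h; exact absurd (Finset.mem_univ m) h
  -- blocks
  have hBsF : ∃ b : ℕ, b ∈ (Finset.range ((en m).edges.length + 1)).filter
      (fun b => 1 ≤ b ∧ ∃ j : Fin K, j < m ∧ c (en j) ≠ 0 ∧
        ∀ k (hk : k < (en m).edges.length), k < b → (en m).edges[k]'hk ∈ (en j).edges) := by
    obtain ⟨j, hjm, hcj, hmem⟩ := cov 0 hL
    refine ⟨1, ?_⟩
    rw [Finset.mem_filter]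
    refine ⟨Finset.mem_range.2 (by omega), le_refl 1, j, hjm, hcj, ?_⟩
    intro k hk hk1
    have : k = 0 := by omega
    subst this; exact hmem
  set sF := (Finset.range ((en m).edges.length + 1)).filter
      (fun b => 1 ≤ b ∧ ∃ j : Fin K, j < m ∧ c (en j) ≠ 0 ∧
        ∀ k (hk : k < (en m).edges.length), k < b → (en m).edges[k]'hk ∈ (en j).edges)
      with hsF
  have hsFne : sF.Nonempty := hBsF
  set b0 := sF.max' hsFne with hb0
  have hb0mem := Finset.mem_filter.1 (sF.max'_mem hsFne)
  have hb0len : b0 < (en m).edges.length + 1 := Finset.mem_range.1 hb0mem.1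
  obtain ⟨hb01, j₀, hj₀m, hc₀, hB0⟩ := hb0mem.2
  have hb0L : b0 ≤ (en m).edges.length := by omega
  -- maximality
  have hmax : ∀ j : Fin K, j < m → c (en j) ≠ 0 →
      (∀ k (hk : k < (en m).edges.length), k < b0 + 1 → (en m).edges[k]'hk ∈ (en j).edges) →
      b0 < (en m).edges.length → False := by
    intro j hjm hcj hB hblt
    have hmem : b0 + 1 ∈ sF :=
      Finset.mem_filter.2 ⟨Finset.mem_range.2 (by omega), by omega, j, hjm, hcj, hB⟩
    have := Finset.le_max' sF _ hmem
    omega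
  rcases eq_or_lt_of_le hb0L with hbeq | hblt
  · -- full block: en j₀ contains every edge of en m, so equal paths, contradiction
    have : en m = en j₀ := by
      apply gpath_eq_of_subset hdag
      intro e he
      obtain ⟨k, hk, rfl⟩ := List.mem_iff_getElem.1 he
      exact hB0 k hk (by omega)
    exact absurd (hinj this) (ne_of_gt hj₀m)
  · -- extension step
    obtain ⟨j₁, hj₁m, hc₁, hmem₁⟩ := cov b0 hblt
    -- out-edge of en j₀ at the node src((en m).edges[b0])
    have hprev : (en m).edges[b0 - 1]'(by omega) ∈ (en j₀).edges :=
      hB0 (b0 - 1) (by omega) (by omega)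
    have htgt : tgt ((en m).edges[b0 - 1]'(by omega)) = src ((en m).edges[b0]'hblt) :=
      chain_step' (en m) (by omega) hblt
    have hnt : tgt ((en m).edges[b0 - 1]'(by omega)) ≠ t := by
      rw [htgt]; exact hdag.2.2.1 _
    obtain ⟨g₀, hg₀mem, hg₀src⟩ := path_next (en j₀) hprev hnt
    have hg₀ : src g₀ = src ((en m).edges[b0]'hblt) := hg₀src.trans htgt
    have hBsucc : ∀ j : Fin K,
        (∀ k (hk : k < (en m).edges.length), k < b0 → (en m).edges[k]'hk ∈ (en j).edges) →
        ((en m).edges[b0]'hblt ∈ (en j).edges) →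
        (∀ k (hk : k < (en m).edges.length), k < b0 + 1 → (en m).edges[k]'hk ∈ (en j).edges) := by
      intro j hB hb k hk hk1
      rcases Nat.lt_succ_iff_lt_or_eq.1 hk1 with h | h
      · exact hB k hk h
      · subst h; exact hb
    have hg₀ne : g₀ ≠ (en m).edges[b0]'hblt := by
      intro h
      exact hmax j₀ hj₀m hc₀ (hBsucc j₀ hB0 (h ▸ hg₀mem)) hblt
    have hj₀j₁ : j₀ < j₁ := by
      rcases lt_trichotomy j₀ j₁ with h | h | h
      · exact h
      · exfalso
        subst h
        exact hmax j₀ hj₀m hc₀ (hBsucc j₀ hB0 hmem₁) hblt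
      · exfalso
        have t1 : tri ((en m).edges[b0]'hblt) g₀ :=
          horder m j₀ hj₀m (src ((en m).edges[b0]'hblt)) _ _
            (List.getElem_mem hblt) hg₀mem rfl hg₀
        have t2 : tri g₀ ((en m).edges[b0]'hblt) :=
          horder j₀ j₁ h (src ((en m).edges[b0]'hblt)) _ _
            hg₀mem hmem₁ hg₀ rfl
        exact hg₀ne (hanti _ _ t2 t1)
    -- j₁ contains the whole prefix
    have key : ∀ k, k < b0 → ∀ (hk : k < (en m).edges.length),
        (en m).edges[k]'hk ∈ (en j₁).edges := by
      intro k
      induction k with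
      | zero =>
        intro h0 hk
        have hgmem : (en j₁).edges.head (en j₁).ne ∈ (en j₁).edges := List.head_mem _
        have hgsrc : src ((en j₁).edges.head (en j₁).ne) = s := (en j₁).first
        have hF0 : src ((en m).edges[0]'hk) = s := src_get0 (en m) hk
        have t1 : tri ((en m).edges[0]'hk) ((en j₁).edges.head (en j₁).ne) :=
          horder m j₁ hj₁m s _ _ (List.getElem_mem hk) hgmem hF0 hgsrc
        have t2 : tri ((en j₁).edges.head (en j₁).ne) ((en m).edges[0]'hk) :=
          horder j₁ j₀ hj₀j₁ s _ _ hgmem (hB0 0 hk h0) hgsrc hF0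
        exact (hanti _ _ t2 t1) ▸ hgmem
      | succ k ih =>
        intro hsb hk
        have hkL : k < (en m).edges.length := by omega
        have hkmem : (en m).edges[k]'hkL ∈ (en j₁).edges := ih (by omega) hkL
        have hstep : tgt ((en m).edges[k]'hkL) = src ((en m).edges[k+1]'hk) :=
          chain_step (en m) hk
        have hnt' : tgt ((en m).edges[k]'hkL) ≠ t := by
          rw [hstep]; exact hdag.2.2.1 _
        obtain ⟨g, hgmem, hgsrc⟩ := path_next (en j₁) hkmem hnt'
        have hgsrc' : src g = src ((en m).edges[k+1]'hk) := hgsrc.trans hstep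
        have t1 : tri ((en m).edges[k+1]'hk) g :=
          horder m j₁ hj₁m (src ((en m).edges[k+1]'hk)) _ _
            (List.getElem_mem hk) hgmem rfl hgsrc'
        have t2 : tri g ((en m).edges[k+1]'hk) :=
          horder j₁ j₀ hj₀j₁ (src ((en m).edges[k+1]'hk)) _ _
            hgmem (hB0 (k+1) hk hsb) hgsrc' rfl
        exact (hanti _ _ t2 t1) ▸ hgmem
    exact hmax j₁ hj₁m hc₁
      (hBsucc j₁ (fun k hk hkb => key k hkb hk) hmem₁) hblt

variable (src tgt s t)

theorem statement19 (hdag : IsDAG src tgt s t) (f : E → ℝ)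
    (hf : IsQuasiFlow src tgt s t f)
    (tri : E → E → Prop) (htri : IsLinearOrder E tri)
    (π : GPath src tgt s t → ℝ)
    (hπ : IsPathDecomp src tgt s t f π) (hsp : SwapProgG src tgt s t tri π) :
    π ∈ Set.extremePoints ℝ {π' : GPath src tgt s t → ℝ |
      IsPathDecomp src tgt s t f π'} := by
  obtain ⟨K, en, hinj, hrange, horder⟩ := hsp
  rw [mem_extremePoints]
  refine ⟨hπ, ?_⟩
  intro x hx y hy hseg
  obtain ⟨a, b, ha, hb, hab, hxy⟩ := hseg
  have hpt : ∀ P, a * x P + b * y P = π P := by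
    intro P
    have := congrFun hxy P
    simpa using this
  have hx0 : ∀ P, π P = 0 → x P = 0 ∧ y P = 0 := by
    intro P h0
    have h1 := hpt P
    rw [h0] at h1
    have hx' := hx.1 P
    have hy' := hy.1 P
    constructor <;> nlinarith
  -- finsum reduction
  have hsub : ∀ (g : GPath src tgt s t → ℝ), Function.support g ⊆ Set.range en →
      ∑ᶠ P, g P = ∑ i : Fin K, g (en i) := by
    intro g hg
    have hcoe : Function.support g ⊆ ((Finset.univ.image en : Finset (GPath src tgt s t)) : Set _) := by
      rwa [Finset.coe_image, Finset.coe_univ, Set.image_univ]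
    rw [finsum_eq_finset_sum_of_support_subset g hcoe,
      Finset.sum_image (fun a _ b _ h => hinj h)]
  have hπsupp : ∀ P, P ∉ Set.range en → π P = 0 := by
    intro P hP
    by_contra h0
    exact hP (by rw [hrange]; exact h0)
  have hsx : Function.support x ⊆ Set.range en := by
    intro P hP
    by_contra hPr
    exact hP ((hx0 P (hπsupp P hPr)).1)
  have hsy : Function.support y ⊆ Set.range en := by
    intro P hP
    by_contra hPr
    exact hP ((hx0 P (hπsupp P hPr)).2)
  set c : GPath src tgt s t → ℝ := fun P => x P - y P with hcdef
  have hsc : Function.support c ⊆ Set.range en := by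
    intro P hP
    by_contra hPr
    apply hP
    show x P - y P = 0
    rw [(hx0 P (hπsupp P hPr)).1, (hx0 P (hπsupp P hPr)).2, sub_zero]
  have hker : ∀ e : E, (∑ i : Fin K, if e ∈ (en i).edges then c (en i) else 0) = 0 := by
    intro e
    have hix : Function.support (fun P : GPath src tgt s t => if e ∈ P.edges then x P else 0)
        ⊆ Set.range en := fun P hP => hsx (fun h0 => hP (by simp [h0]))
    have hiy : Function.support (fun P : GPath src tgt s t => if e ∈ P.edges then y P else 0)
        ⊆ Set.range en := fun P hP => hsy (fun h0 => hP (by simp [h0]))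
    have hxe : f e = ∑ i : Fin K, (if e ∈ (en i).edges then x (en i) else 0) :=
      (hx.2 e).trans (hsub _ hix)
    have hye : f e = ∑ i : Fin K, (if e ∈ (en i).edges then y (en i) else 0) :=
      (hy.2 e).trans (hsub _ hiy)
    have hsplit : ∀ i : Fin K, (if e ∈ (en i).edges then c (en i) else 0)
        = (if e ∈ (en i).edges then x (en i) else 0) -
          (if e ∈ (en i).edges then y (en i) else 0) := by
      intro i
      by_cases h : e ∈ (en i).edges <;> simp [h, hcdef]
    rw [Finset.sum_congr rfl (fun i _ => hsplit i), Finset.sum_sub_distrib, ← hxe, ← hye,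
      sub_self]
  have hc0 : c = 0 := ker_lemma hdag htri en hinj horder c hsc hker
  have hxyeq : x = y := by
    funext P
    have := congrFun hc0 P
    exact sub_eq_zero.1 this
  subst hxyeq
  have hxπ : x = π := by
    funext P
    rw [← hpt P, ← add_mul, hab, one_mul]
  exact ⟨hxπ, hxπ⟩


end StmtDAG
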